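/- arXiv:1612.08357 — 9 statements merged into one kernel-verified Lean document; each statement's English description precedes it below -/
import Mathlib

section
/- Suppose $2 \in J(R)$. If $1 - e \in \chi(1 - a)$ or $1 - e \in \chi(1 + a)$ for an idempotent $e$ of a ring $R$, then $e \in \chi(a)$. -/
/-- The set χ(a) of idempotents e with a - e or a + e a unit. -/
def chi {R : Type u} [Ring R] (a : R) : Set R :=
  {e | e * e = e ∧ (IsUnit (a - e) ∨ IsUnit (a + e))}

lemma isUnit_one_add_of_mem_jacobson {R : Type u} [Ring R] {j : R}
    (hj : j ∈ Ideal.jacobson (⊥ : Ideal R)) : IsUnit (1 + j) := by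
  obtain ⟨z, hz⟩ := Ideal.mem_jacobson_iff.1 hj 1
  rw [Ideal.mem_bot, mul_one, sub_eq_zero] at hz
  have hz1 : z * (1 + j) = 1 := by rw [mul_one_add, add_comm]; exact hz
  have hzj : -(z * j) ∈ Ideal.jacobson (⊥ : Ideal R) :=
    neg_mem (Ideal.mul_mem_left _ z hj)
  obtain ⟨w, hw⟩ := Ideal.mem_jacobson_iff.1 hzj 1
  rw [Ideal.mem_bot, mul_one, sub_eq_zero] at hw
  have hz' : z = 1 - z * j := by rw [eq_sub_iff_add_eq, add_comm]; exact hz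
  have hwz : w * z = 1 := by
    rw [hz', mul_sub, mul_one]
    rw [mul_neg, neg_add_eq_sub] at hw
    exact hw
  have h1 : (1 + j) * z = 1 := by
    calc (1 + j) * z = (w * z) * ((1 + j) * z) := by rw [hwz, one_mul]
    _ = w * (z * (1 + j)) * z := by noncomm_ring
    _ = 1 := by rw [hz1, mul_one, hwz]
  exact ⟨⟨1 + j, z, h1, hz1⟩, rfl⟩

lemma isUnit_add_of_mem_jacobson {R : Type u} [Ring R] {u j : R}
    (hu : IsUnit u) (hj : j ∈ Ideal.jacobson (⊥ : Ideal R)) : IsUnit (u + j) := by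
  obtain ⟨v, rfl⟩ := hu
  have h : (v : R) + j = v * (1 + (v⁻¹ : Rˣ) * j) := by
    rw [mul_add, mul_one, ← mul_assoc, Units.mul_inv, one_mul]
  rw [h]
  exact (Units.isUnit v).mul (isUnit_one_add_of_mem_jacobson
    (Ideal.mul_mem_left _ _ hj))

theorem stmt_4 {R : Type u} [Ring R] (h2 : (2 : R) ∈ Ideal.jacobson (⊥ : Ideal R))
    (a e : R) (he : e * e = e)
    (h : (1 - e) ∈ chi (1 - a) ∨ (1 - e) ∈ chi (1 + a)) : e ∈ chi a := by
  refine ⟨he, ?_⟩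
  have hn2 : (-2 : R) ∈ Ideal.jacobson (⊥ : Ideal R) := neg_mem h2
  rcases h with ⟨-, h1 | h1⟩ | ⟨-, h1 | h1⟩
  · left
    have := h1.neg
    rw [show -((1 - a) - (1 - e)) = a - e by abel] at this
    exact this
  · right
    have := isUnit_add_of_mem_jacobson h1.neg h2
    rw [show -((1 - a) + (1 - e)) + 2 = a + e by rw [show (2:R) = 1 + 1 from one_add_one_eq_two.symm]; abel] at this
    exact this
  · right
    rw [show (1 + a) - (1 - e) = a + e by abel] at h1
    exact h1
  · left
    have := isUnit_add_of_mem_jacobson h1 hn2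
    rw [show ((1 + a) + (1 - e)) + -2 = a - e by rw [show (2:R) = 1 + 1 from one_add_one_eq_two.symm]; abel] at this
    exact this
end

section
/- Let $R$ be a ring and suppose for every nonzero idempotent $e$ of $R$, $e$ is not the sum of two units, and $R$ is abelian (all idempotents are central). Then for every $a \in R$, $|\chi(a)| \le 1$; i.e., $win(R) = 1$. -/
/-- The weak clean index of a ring. -/
noncomputable def win (R : Type u) [Ring R] : Cardinal :=
  ⨆ a : R, Cardinal.mk (chi a)

/-- If `g` is a central idempotent and `u` a unit, then `u*g + (1-g)` is a unit. -/
lemma unit_glue {R : Type u} [Ring R] {g u : R} (hgg : g * g = g)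
    (hg : ∀ b : R, g * b = b * g) (hu : IsUnit u) : IsUnit (u * g + (1 - g)) := by
  obtain ⟨v, hv⟩ := hu
  have key : ∀ x y : R, x * y = 1 → (x * g + (1 - g)) * (y * g + (1 - g)) = 1 := by
    intro x y hxy
    have h1 : x * g * (y * g) = g := by
      rw [mul_assoc x g (y * g), ← mul_assoc g y g, hg y, mul_assoc y g g, hgg,
        ← mul_assoc, hxy, one_mul]
    have h2 : x * g * (1 - g) = 0 := by
      rw [mul_assoc, mul_sub, mul_one, hgg, sub_self, mul_zero]
    have h3 : (1 - g) * (y * g) = 0 := by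
      rw [sub_mul, one_mul, ← mul_assoc, hg y, mul_assoc, hgg, sub_self]
    have h4 : (1 - g) * (1 - g) = 1 - g := by
      rw [sub_mul, one_mul, mul_sub, mul_one, hgg]
      abel
    rw [mul_add, add_mul, add_mul, h1, h2, h3, h4]
    abel
  refine ⟨⟨u * g + (1 - g), (v⁻¹ : Rˣ) * g + (1 - g), ?_, ?_⟩, rfl⟩
  · exact key _ _ (by rw [← hv]; exact v.mul_inv)
  · exact key _ _ (by rw [← hv]; exact v.inv_mul)

/-- A central idempotent which is a difference of units (times itself) vanishes. -/
lemma keyA {R : Type u} [Ring R]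
    (hsum : ∀ e : R, e * e = e → e ≠ 0 → ¬∃ u v : R, IsUnit u ∧ IsUnit v ∧ e = u + v)
    {g u w : R} (hgg : g * g = g) (hg : ∀ b : R, g * b = b * g)
    (hu : IsUnit u) (hw : IsUnit w) (h : (u - w) * g = g) : g = 0 := by
  by_contra hne
  refine hsum g hgg hne ⟨u * g + (1 - g), -(w * g + (1 - g)),
    unit_glue hgg hg hu, (unit_glue hgg hg hw).neg, ?_⟩
  have h2 : u * g - w * g = g := by rw [← sub_mul, h]
  have h3 : u * g + (1 - g) + -(w * g + (1 - g)) = u * g - w * g := by abel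
  rw [h3, h2]

lemma half {R : Type u} [Ring R]
    (habel : ∀ e : R, e * e = e → e ∈ Set.center R)
    (hsum : ∀ e : R, e * e = e → e ≠ 0 → ¬∃ u v : R, IsUnit u ∧ IsUnit v ∧ e = u + v)
    {a e f : R} (he : e ∈ chi a) (hf : f ∈ chi a) : e * f = e := by
  obtain ⟨hee, hue⟩ := he
  obtain ⟨hff, huf⟩ := hf
  have hec : ∀ b : R, e * b = b * e := fun b => (habel e hee).comm b
  have hfc : ∀ b : R, f * b = b * f := fun b => (habel f hff).comm b
  set g : R := e - e * f with hgdef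
  have hg : ∀ b : R, g * b = b * g := by
    intro b
    have : e * f * b = b * (e * f) := by
      rw [mul_assoc, hfc b, ← mul_assoc, hec b, mul_assoc]
    rw [hgdef, sub_mul, mul_sub, hec b, this]
  have p1 : e * (e * f) = e * f := by rw [← mul_assoc, hee]
  have p2 : e * f * e = e * f := by rw [mul_assoc, ← hec f, ← mul_assoc, hee]
  have q : f * (e * f) = e * f := by rw [← mul_assoc, hfc e, mul_assoc, hff]
  have p3 : e * f * (e * f) = e * f := by rw [mul_assoc, q, p1]
  have hgg : g * g = g := by
    show (e - e * f) * (e - e * f) = e - e * f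
    rw [sub_mul, mul_sub, mul_sub, hee, p1, p2, p3, sub_self, sub_zero]
  have heg : e * g = g := by
    show e * (e - e * f) = e - e * f
    rw [mul_sub, hee, p1]
  have hfg : f * g = 0 := by
    show f * (e - e * f) = 0
    rw [mul_sub, hfc e, q, sub_self]
  have hg0 : g = 0 := by
    rcases hue with hu | hu <;> rcases huf with hw | hw
    · refine keyA hsum hgg hg hw hu ?_
      have hd : a - f - (a - e) = e - f := by abel
      rw [hd, sub_mul, heg, hfg, sub_zero]
    · refine keyA hsum hgg hg hw hu ?_
      have hd : a + f - (a - e) = f + e := by abel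
      rw [hd, add_mul, heg, hfg, zero_add]
    · refine keyA hsum hgg hg hu hw ?_
      have hd : a + e - (a - f) = e + f := by abel
      rw [hd, add_mul, heg, hfg, add_zero]
    · refine keyA hsum hgg hg hu hw ?_
      have hd : a + e - (a + f) = e - f := by abel
      rw [hd, sub_mul, heg, hfg, sub_zero]
  have := sub_eq_zero.mp (hgdef ▸ hg0)
  exact this.symm

theorem stmt_10 {R : Type u} [Ring R]
    (habel : ∀ e : R, e * e = e → e ∈ Set.center R)
    (hsum : ∀ e : R, e * e = e → e ≠ 0 → ¬∃ u v : R, IsUnit u ∧ IsUnit v ∧ e = u + v) :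
    (∀ a : R, Cardinal.mk (chi a) ≤ 1) ∧ win R = 1 := by
  have hle : ∀ a : R, Cardinal.mk (chi a) ≤ 1 := by
    intro a
    rw [Cardinal.mk_le_one_iff_set_subsingleton]
    intro e he f hf
    have h1 : e * f = e := half habel hsum he hf
    have h2 : f * e = f := half habel hsum hf he
    have h3 : e * f = f * e := (habel e he.1).comm f
    rw [h1, h2] at h3
    exact h3
  refine ⟨hle, le_antisymm (ciSup_le' hle) ?_⟩
  have h0 : (0 : R) ∈ chi (1 : R) := ⟨mul_zero 0, Or.inl (by simp)⟩
  have h1 : (1 : Cardinal) ≤ Cardinal.mk (chi (1 : R)) :=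
    Cardinal.one_le_iff_ne_zero.2 (Cardinal.mk_ne_zero_iff.2 ⟨⟨0, h0⟩⟩)
  refine h1.trans (le_ciSup (f := fun a : R => Cardinal.mk (chi a)) ?_ 1)
  exact ⟨1, by rintro x ⟨a, rfl⟩; exact hle a⟩
end

section
/- If $win(R) = 1$ (i.e., $|\chi(a)| \le 1$ for all $a \in R$), then $R$ is abelian: every idempotent of $R$ is central. -/
lemma unit_one_sub_sq_zero {R : Type u} [Ring R] {t : R} (ht : t * t = 0) :
    IsUnit (1 - t) := by
  have h1 : (1 - t) * (1 + t) = 1 := by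
    have h : (1 - t) * (1 + t) = 1 - t * t := by noncomm_ring
    rw [h, ht, sub_zero]
  have h2 : (1 + t) * (1 - t) = 1 := by
    have h : (1 + t) * (1 - t) = 1 - t * t := by noncomm_ring
    rw [h, ht, sub_zero]
  exact ⟨⟨1 - t, 1 + t, h1, h2⟩, rfl⟩

lemma chi_subsingleton {R : Type u} [Ring R] (h : win R = 1) (a : R) :
    (chi a).Subsingleton := by
  have hle : Cardinal.mk (chi a) ≤ 1 := by
    rw [← h]
    exact le_ciSup (Cardinal.bddAbove_range _) a
  exact Cardinal.mk_le_one_iff_set_subsingleton.mp hle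

theorem stmt_11 {R : Type u} [Ring R] (h : win R = 1) :
    ∀ e : R, e * e = e → e ∈ Set.center R := by
  intro e he
  rw [Semigroup.mem_center_iff]
  intro x
  have key : ∀ u : R, e * u + u * e = u → u * u = 0 → u = 0 := by
    intro u hu1 hu2
    have ht : (e + u) * (e + u) = e + u := by
      rw [add_mul, mul_add, mul_add, he, hu2, add_zero, add_assoc, hu1]
    have h1 : e ∈ chi (1 + e) := ⟨he, Or.inl (by simp)⟩
    have h2 : (e + u) ∈ chi (1 + e) := by
      refine ⟨ht, Or.inl ?_⟩
      have hrw : (1 + e) - (e + u) = 1 - u := by abel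
      rw [hrw]
      exact unit_one_sub_sq_zero hu2
    have heq := chi_subsingleton h (1 + e) h2 h1
    exact add_eq_left.mp heq
  have mid : (1 - e) * e = 0 := by rw [sub_mul, one_mul, he, sub_self]
  have e1 : e * x * (1 - e) = 0 := by
    apply key
    · have a1 : e * (e * x * (1 - e)) = e * x * (1 - e) := by
        rw [← mul_assoc, ← mul_assoc, he]
      have a2 : (e * x * (1 - e)) * e = 0 := by
        rw [mul_assoc, mid, mul_zero]
      rw [a1, a2, add_zero]
    · have h3 : e * x * (1 - e) * (e * x * (1 - e)) = e * x * ((1 - e) * e * (x * (1 - e))) := by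
        noncomm_ring
      rw [h3, mid, zero_mul, mul_zero]
  have e2 : (1 - e) * x * e = 0 := by
    apply key
    · have a1 : e * ((1 - e) * x * e) = 0 := by
        have : e * (1 - e) = 0 := by rw [mul_sub, mul_one, he, sub_self]
        rw [← mul_assoc, ← mul_assoc, this, zero_mul, zero_mul]
      have a2 : ((1 - e) * x * e) * e = (1 - e) * x * e := by
        rw [mul_assoc, he]
      rw [a1, a2, zero_add]
    · have this2 : e * (1 - e) = 0 := by rw [mul_sub, mul_one, he, sub_self]
      have h3 : (1 - e) * x * e * ((1 - e) * x * e) = (1 - e) * x * (e * (1 - e) * (x * e)) := by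
        noncomm_ring
      rw [h3, this2, zero_mul, mul_zero]
  have A : e * x = e * x * e := by
    have : e * x * (1 - e) = e * x - e * x * e := by noncomm_ring
    rw [this] at e1
    exact (sub_eq_zero.mp e1)
  have B : x * e = e * x * e := by
    have : (1 - e) * x * e = x * e - e * x * e := by noncomm_ring
    rw [this] at e2
    exact (sub_eq_zero.mp e2)
  exact B.trans A.symm
end

section
/- If $win(R) = 1$, then no nonzero idempotent of $R$ can be written as the sum of two units. -/
theorem stmt_12 {R : Type u} [Ring R] (h : win R = 1) :
    ∀ e : R, e * e = e → e ≠ 0 → ¬∃ u v : R, IsUnit u ∧ IsUnit v ∧ e = u + v := by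
  rintro e he hne ⟨u, v, hu, hv, huv⟩
  have h0 : (0 : R) ∈ chi u := ⟨mul_zero 0, Or.inl (by simpa using hu)⟩
  have he' : e ∈ chi u := by
    refine ⟨he, Or.inl ?_⟩
    have hsub : u - e = -v := by rw [huv]; abel
    rw [hsub]
    exact hv.neg
  have hle : Cardinal.mk (chi u) ≤ win R :=
    le_ciSup (Cardinal.bddAbove_range _) u
  rw [h] at hle
  have h2 : (2 : Cardinal) ≤ Cardinal.mk (chi u) := by
    rw [Cardinal.two_le_iff]
    exact ⟨⟨e, he'⟩, ⟨0, h0⟩, fun hc => hne (congrArg Subtype.val hc)⟩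
  exact absurd (h2.trans hle) (by norm_num)
end

section
/- If $R$ is not abelian (has a non-central idempotent), then the polynomial ring $R[x]$ has infinite weak clean index: there exists $a \in R[x]$ with $\chi(a)$ infinite. -/
open Polynomial in
lemma chi_aux {R : Type u} [Ring R] (e f : R) (he : e * e = e)
    (hef : e * f + f * e = f) (hff : f * f = 0) (hf : f ≠ 0) :
    ∃ a : Polynomial R, (chi a).Infinite := by
  refine ⟨1 - C e, Set.infinite_of_injective_forall_mem
    (f := fun n : ℕ => C e + C f * X ^ n) ?_ ?_⟩
  · intro n m h
    by_contra hnm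
    have h2 : (C f * X ^ n : Polynomial R) = C f * X ^ m := add_left_cancel h
    have h3 := congrArg (fun p => Polynomial.coeff p n) h2
    simp [coeff_C_mul, coeff_X_pow, hnm] at h3
    exact hf h3
  · intro n
    have h1 : (C f * X ^ n : Polynomial R) * C e = (C f * C e) * X ^ n := by
      rw [mul_assoc, ((Polynomial.commute_X (C e)).pow_left n).eq, ← mul_assoc]
    have h2 : (C f * X ^ n : Polynomial R) * (C f * X ^ n)
        = (C f * C f) * (X ^ n * X ^ n) := by
      rw [mul_assoc, ← mul_assoc (X ^ n), ((Polynomial.commute_X (C f)).pow_left n).eq,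
        mul_assoc, ← mul_assoc]
    have ht2 : (C f * X ^ n : Polynomial R) * (C f * X ^ n) = 0 := by
      rw [h2, ← C_mul, hff]; simp
    constructor
    · have expand : (C e + C f * X ^ n) * (C e + C f * X ^ n)
          = C e * C e + (C e * C f) * X ^ n + ((C f * C e) * X ^ n
            + (C f * C f) * (X ^ n * X ^ n)) := by
        rw [add_mul, mul_add, mul_add, h1, h2, ← mul_assoc]
      show (C e + C f * X ^ n) * (C e + C f * X ^ n) = C e + C f * X ^ n
      rw [expand, ← C_mul, ← C_mul, ← C_mul, ← C_mul, hff, map_zero, zero_mul, add_zero,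
        he, add_assoc, ← add_mul, ← C_add, hef]
    · right
      have hkey : (1 - C e) + (C e + C f * X ^ n) = 1 + C f * X ^ n := by
        noncomm_ring
      show IsUnit ((1 - C e) + (C e + C f * X ^ n))
      rw [hkey]
      refine ⟨⟨1 + C f * X ^ n, 1 - C f * X ^ n, ?_, ?_⟩, rfl⟩
      · have hmul : (1 + C f * X ^ n) * (1 - C f * X ^ n)
            = 1 - (C f * X ^ n) * (C f * X ^ n) := by noncomm_ring
        rw [hmul, ht2, sub_zero]
      · have hmul : (1 - C f * X ^ n) * (1 + C f * X ^ n)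
            = 1 - (C f * X ^ n) * (C f * X ^ n) := by noncomm_ring
        rw [hmul, ht2, sub_zero]

theorem stmt_13 {R : Type u} [Ring R] (e : R) (he : e * e = e)
    (hnc : e ∉ Set.center R) :
    ∃ a : Polynomial R, (chi a).Infinite := by
  rw [Semigroup.mem_center_iff] at hnc
  push_neg at hnc
  obtain ⟨r, hr⟩ := hnc
  have hee1 : e * (1 - e) = 0 := by rw [mul_sub, he, mul_one, sub_self]
  have h1e : (1 - e) * e = 0 := by rw [sub_mul, he, one_mul, sub_self]
  by_cases h1 : e * r * (1 - e) = 0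
  · -- use f = (1-e)*r*e
    have hef : e * ((1 - e) * r * e) = 0 := by
      calc e * ((1 - e) * r * e) = (e * (1 - e)) * r * e := by noncomm_ring
        _ = 0 := by rw [hee1]; simp
    have hfe : ((1 - e) * r * e) * e = (1 - e) * r * e := by
      calc (1 - e) * r * e * e = (1 - e) * r * (e * e) := by noncomm_ring
        _ = (1 - e) * r * e := by rw [he]
    have hff : ((1 - e) * r * e) * ((1 - e) * r * e) = 0 := by
      calc ((1 - e) * r * e) * ((1 - e) * r * e)
          = (((1 - e) * r * e) * e) * ((1 - e) * r * e) := by rw [hfe]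
        _ = ((1 - e) * r * e) * (e * ((1 - e) * r * e)) := by
              rw [mul_assoc ((1 - e) * r * e) e ((1 - e) * r * e)]
        _ = 0 := by rw [hef, mul_zero]
    have hf : (1 - e) * r * e ≠ 0 := by
      intro h0
      apply hr
      have h1' : e * r = e * r * e := by
        have hz : e * r - e * r * e = 0 := by
          have hrw : e * r * (1 - e) = e * r - e * r * e := by noncomm_ring
          rw [← hrw, h1]
        exact (sub_eq_zero.mp hz)
      have h2' : r * e = e * r * e := by
        have hz : r * e - e * r * e = 0 := by
          have hrw : (1 - e) * r * e = r * e - e * r * e := by noncomm_ring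
          rw [← hrw, h0]
        exact sub_eq_zero.mp hz
      rw [h2']; exact h1'.symm
    exact chi_aux e ((1 - e) * r * e) he (by rw [hef, hfe, zero_add]) hff hf
  · -- use f = e*r*(1-e)
    have hef : e * (e * r * (1 - e)) = e * r * (1 - e) := by
      calc e * (e * r * (1 - e)) = (e * e) * r * (1 - e) := by noncomm_ring
        _ = e * r * (1 - e) := by rw [he]
    have hfe : (e * r * (1 - e)) * e = 0 := by
      calc e * r * (1 - e) * e = e * r * ((1 - e) * e) := by noncomm_ring
        _ = 0 := by rw [h1e, mul_zero]
    have hff : (e * r * (1 - e)) * (e * r * (1 - e)) = 0 := by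
      calc (e * r * (1 - e)) * (e * r * (1 - e))
          = ((e * r * (1 - e)) * e) * (r * (1 - e)) := by noncomm_ring
        _ = 0 := by rw [hfe, zero_mul]
    exact chi_aux e (e * r * (1 - e)) he (by rw [hef, hfe, add_zero]) hff h1
end

section
/- If $R$ is abelian, then for any power series $\alpha = a_0 + a_1 x + \cdots \in R[[x]]$, we have $\chi_{R[[x]]}(\alpha) \subseteq \chi_R(a_0)$ (identifying idempotents of $R[[x]]$, which all lie in $R$, with elements of $R$); hence $win(R[[x]]) \le win(R)$. -/
lemma idem_const {R : Type u} [Ring R]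
    (habel : ∀ e : R, e * e = e → e ∈ Set.center R)
    (ε : PowerSeries R) (hε : ε * ε = ε) :
    ε = PowerSeries.C (PowerSeries.constantCoeff ε) := by
  set e0 := PowerSeries.constantCoeff ε with he0
  have e0idem : e0 * e0 = e0 := by
    have := congrArg (PowerSeries.constantCoeff) hε
    simpa using this
  have e0c : ∀ b : R, e0 * b = b * e0 := fun b => (habel _ e0idem).comm b
  have hzero : ∀ n : ℕ, PowerSeries.coeff (n+1) ε = 0 := by
    intro n
    induction n using Nat.strong_induction_on with
    | _ n ih =>
      set c := PowerSeries.coeff (n+1) ε with hc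
      have key : PowerSeries.coeff (n+1) (ε * ε) = c := by rw [hε]
      rw [PowerSeries.coeff_mul] at key
      rw [Finset.Nat.sum_antidiagonal_eq_sum_range_succ
        (fun i j => PowerSeries.coeff i ε * PowerSeries.coeff j ε)] at key
      rw [Finset.sum_range_succ, Finset.sum_range_succ'] at key
      have hmid : ∀ k ∈ Finset.range n,
          PowerSeries.coeff (k+1) ε * PowerSeries.coeff (n+1-(k+1)) ε = 0 := by
        intro k hk
        rw [ih k (Finset.mem_range.mp hk), zero_mul]
      rw [Finset.sum_congr rfl hmid, Finset.sum_const_zero] at key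
      simp only [Nat.sub_zero, Nat.sub_self] at key
      -- key : 0 + e0 * c + c * e0 = c
      have key2 : e0 * c + c * e0 = c := by
        simpa using key
      have h1 : e0 * c = 0 := by
        have := congrArg (fun x => e0 * x) key2
        simp only [mul_add, ← mul_assoc, e0idem] at this
        -- this : e0 * c + e0 * c * e0 = e0 * c
        have h2 : e0 * c * e0 = 0 := add_eq_left.mp this
        rw [mul_assoc, ← e0c c, ← mul_assoc, e0idem] at h2
        exact h2
      have : c = e0 * c + c * e0 := key2.symm
      rw [← e0c c, h1, add_zero] at this
      exact this
  ext m
  cases m with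
  | zero =>
    simp [he0]
  | succ n =>
    rw [hzero n, PowerSeries.coeff_C]
    simp
theorem stmt_14 {R : Type u} [Ring R]
    (habel : ∀ e : R, e * e = e → e ∈ Set.center R) :
    (∀ α : PowerSeries R, ∀ ε ∈ chi α, ∃ e : R,
        ε = PowerSeries.C e ∧ e ∈ chi (PowerSeries.constantCoeff α)) ∧
      win (PowerSeries R) ≤ win R := by
  have main : ∀ α : PowerSeries R, ∀ ε ∈ chi α, ∃ e : R,
      ε = PowerSeries.C e ∧ e ∈ chi (PowerSeries.constantCoeff α) := by
    intro α ε ⟨hεidem, hεu⟩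
    refine ⟨PowerSeries.constantCoeff ε, idem_const habel ε hεidem, ?_, ?_⟩
    · have := congrArg (PowerSeries.constantCoeff) hεidem
      simpa using this
    · rcases hεu with h | h
      · left
        have := h.map (PowerSeries.constantCoeff)
        simpa using this
      · right
        have := h.map (PowerSeries.constantCoeff)
        simpa using this
  refine ⟨main, ?_⟩
  refine ciSup_le' fun α => ?_
  have hle : Cardinal.mk (chi α) ≤ Cardinal.mk (chi (PowerSeries.constantCoeff α)) := by
    refine ⟨⟨fun ε => ⟨PowerSeries.constantCoeff ε.1, ?_⟩, ?_⟩⟩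
    · obtain ⟨e, he, hmem⟩ := main α ε.1 ε.2
      rwa [he, show PowerSeries.constantCoeff (PowerSeries.C e) = e by simp]
    · intro ε1 ε2 h
      obtain ⟨e1, he1, _⟩ := main α ε1.1 ε1.2
      obtain ⟨e2, he2, _⟩ := main α ε2.1 ε2.2
      have h' : PowerSeries.constantCoeff ε1.1 = PowerSeries.constantCoeff ε2.1 :=
        congrArg Subtype.val h
      apply Subtype.ext
      rw [he1, he2]
      congr 1
      rw [he1] at h'; rw [he2] at h'; simpa using h'
  exact hle.trans (le_ciSup (Cardinal.bddAbove_range _) (PowerSeries.constantCoeff α))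
end

section
/- If $R$ is an abelian ring, then every idempotent of the power series ring $R[[x]]$ lies in $R$ (i.e., has all higher coefficients zero). -/
theorem stmt_15 {R : Type u} [Ring R]
    (habel : ∀ e : R, e * e = e → e ∈ Set.center R) :
    ∀ ε : PowerSeries R, ε * ε = ε → ∃ e : R, ε = PowerSeries.C e := by
  intro ε hε
  set a : ℕ → R := fun n => PowerSeries.coeff n ε with ha
  have hcoeff : ∀ n, ∑ i ∈ Finset.range (n+1), a i * a (n - i) = a n := by
    intro n
    have := congrArg (PowerSeries.coeff n) hε
    rw [PowerSeries.coeff_mul, Finset.Nat.sum_antidiagonal_eq_sum_range_succ_mk] at this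
    exact this
  have h0 : a 0 * a 0 = a 0 := by
    have := hcoeff 0; simpa using this
  have hc : a 0 ∈ Set.center R := habel _ h0
  have hcomm : ∀ x : R, a 0 * x = x * a 0 := fun x => (Set.mem_center_iff.mp hc).1 x
  have hzero : ∀ n, 0 < n → a n = 0 := by
    intro n
    induction n using Nat.strong_induction_on with
    | _ n ih =>
      intro hn
      have hs := hcoeff n
      have key : ∑ i ∈ Finset.range (n+1), a i * a (n - i) = a 0 * a n + a n * a 0 := by
        rw [Finset.sum_range_succ, Finset.sum_eq_single 0]
        · simp [Nat.sub_zero, Nat.sub_self]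
        · intro i hi hi0
          have : a i = 0 := ih i (Finset.mem_range.mp hi) (Nat.pos_of_ne_zero hi0)
          rw [this, zero_mul]
        · intro h0'
          exact absurd (Finset.mem_range.mpr hn) h0'
      rw [key] at hs
      rw [← hcomm (a n)] at hs
      -- hs : a 0 * a n + a 0 * a n = a n
      have h3 : a 0 * a n = 0 := by
        have h2 : a 0 * a n + a 0 * a n = a 0 * a n := by
          calc a 0 * a n + a 0 * a n = a 0 * (a 0 * a n + a 0 * a n) := by
                rw [mul_add, ← mul_assoc, h0]
            _ = a 0 * a n := by rw [hs]
        exact add_left_cancel (h2.trans (add_zero _).symm)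
      rw [h3, add_zero] at hs
      exact hs.symm
  refine ⟨a 0, ?_⟩
  ext n
  rw [PowerSeries.coeff_C]
  rcases Nat.eq_zero_or_pos n with h | h
  · simp [h, ha]
  · rw [if_neg h.ne']
    exact hzero n h
end

section
/- Let $R = A \times B$ be a direct product of rings with $win(A) = 1$. Then $win(R) = win(B)$. -/
lemma isUnit_prod_iff {M : Type*} {N : Type*} [Monoid M] [Monoid N] {p : M × N} :
    IsUnit p ↔ IsUnit p.1 ∧ IsUnit p.2 := by
  constructor
  · rintro ⟨u, rfl⟩
    exact ⟨⟨Units.map (MonoidHom.fst M N) u, rfl⟩, ⟨Units.map (MonoidHom.snd M N) u, rfl⟩⟩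
  · rintro ⟨⟨u, hu⟩, ⟨v, hv⟩⟩
    exact ⟨⟨(u, v), (↑u⁻¹, ↑v⁻¹), by simp, by simp⟩, by simp [hu, hv]⟩

theorem stmt_18 {A : Type u} {B : Type u} [Ring A] [Ring B]
    (hA : win A = 1) : win (A × B) = win B := by
  have hsub : ∀ a : A, (chi a).Subsingleton := by
    intro a
    rw [← Cardinal.mk_le_one_iff_set_subsingleton, ← hA]
    exact le_ciSup (Cardinal.bddAbove_range _) a
  apply le_antisymm
  · -- win (A × B) ≤ win B
    apply ciSup_le
    intro p
    have h1 : Cardinal.mk (chi p) ≤ Cardinal.mk (chi p.2) := by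
      apply Cardinal.mk_le_of_injective (f := fun (e : chi p) =>
        (⟨(e : A × B).2, by
          obtain ⟨e, he, hu⟩ := e
          refine ⟨congrArg Prod.snd he, ?_⟩
          rcases hu with hu | hu
          · exact Or.inl ((isUnit_prod_iff.1 hu).2)
          · exact Or.inr ((isUnit_prod_iff.1 hu).2)⟩ : chi p.2))
      rintro ⟨e, he, hue⟩ ⟨f, hf, huf⟩ h
      simp only [Subtype.mk.injEq] at h ⊢
      have he1 : e.1 ∈ chi p.1 := by
        refine ⟨congrArg Prod.fst he, ?_⟩
        rcases hue with hu | hu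
        · exact Or.inl ((isUnit_prod_iff.1 hu).1)
        · exact Or.inr ((isUnit_prod_iff.1 hu).1)
      have hf1 : f.1 ∈ chi p.1 := by
        refine ⟨congrArg Prod.fst hf, ?_⟩
        rcases huf with hu | hu
        · exact Or.inl ((isUnit_prod_iff.1 hu).1)
        · exact Or.inr ((isUnit_prod_iff.1 hu).1)
      exact Subtype.ext (Prod.ext (hsub p.1 he1 hf1) h)
    exact h1.trans (le_ciSup (Cardinal.bddAbove_range _) p.2)
  · -- win B ≤ win (A × B)
    apply ciSup_le
    intro b
    have h1 : Cardinal.mk (chi b) ≤ Cardinal.mk (chi ((0, b) : A × B)) := by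
      apply Cardinal.mk_le_of_injective (f := fun (e : chi b) =>
        (⟨((1 : A), (e : B)), by
          obtain ⟨e, he, hu⟩ := e
          refine ⟨Prod.ext (one_mul 1) he, ?_⟩
          rcases hu with hu | hu
          · refine Or.inl (isUnit_prod_iff.2 ⟨?_, hu⟩)
            simp
          · refine Or.inr (isUnit_prod_iff.2 ⟨?_, hu⟩)
            simp⟩ : chi ((0, b) : A × B)))
      rintro ⟨e, _⟩ ⟨f, _⟩ h
      simp only [Subtype.mk.injEq, Prod.mk.injEq] at h
      exact Subtype.ext h.2
    exact h1.trans (le_ciSup (Cardinal.bddAbove_range _) ((0 : A), b))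
end

section
/- Let $e$ be a non-central idempotent of a ring $R$ such that both $eR(1-e) \ne 0$ and $(1-e)Re \ne 0$. Then $|\chi(1 - e)| \ge 3$. -/
theorem stmt_19 {R : Type u} [Ring R] (e : R) (he : e * e = e)
    (hnc : e ∉ Set.center R)
    (hM : ∃ r : R, e * r * (1 - e) ≠ 0) (hN : ∃ r : R, (1 - e) * r * e ≠ 0) :
    3 ≤ Cardinal.mk (chi (1 - e)) := by
  obtain ⟨r, hr⟩ := hM
  obtain ⟨s, hs⟩ := hN
  set x := e * r * (1 - e) with hx
  set y := (1 - e) * s * e with hy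
  have he1 : e * (1 - e) = 0 := by rw [mul_sub, mul_one, he, sub_self]
  have h1e : (1 - e) * e = 0 := by rw [sub_mul, one_mul, he, sub_self]
  have hex : e * x = x := by rw [hx, ← mul_assoc, ← mul_assoc, he]
  have hxe : x * e = 0 := by rw [hx, mul_assoc, mul_assoc, h1e, mul_zero, mul_zero]
  have hye : y * e = y := by rw [hy, mul_assoc, mul_assoc, he, ← mul_assoc]
  have hey : e * y = 0 := by rw [hy, ← mul_assoc, ← mul_assoc, he1, zero_mul, zero_mul]
  have hxx : x * x = 0 := by
    have h := congrArg (· * x) hxe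
    simpa [mul_assoc, hex] using h
  have hyy : y * y = 0 := by
    have h := congrArg (y * ·) hey
    simpa [← mul_assoc, hye] using h
  have sq1 : ∀ z : R, e * z + z * e = z → z * z = 0 →
      (1 - 2*e - z) * (1 - 2*e - z) = 1 := by
    intro z h1 h2
    have key : (1 - 2*e - z) * (1 - 2*e - z)
        = 1 - 4*e + 4*(e*e) - 2*z + 2*(e*z + z*e) + z*z := by noncomm_ring
    rw [key, he, h1, h2]
    noncomm_ring
  have mem : ∀ z : R, e * z + z * e = z → z * z = 0 → (e + z) ∈ chi (1 - e) := by
    intro z h1 h2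
    constructor
    · have key : (e + z) * (e + z) = e*e + (e*z + z*e) + z*z := by noncomm_ring
      rw [key, he, h1, h2, add_zero]
    · left
      have h3 : 1 - e - (e + z) = 1 - 2*e - z := by noncomm_ring
      rw [h3]
      exact ⟨⟨_, _, sq1 z h1 h2, sq1 z h1 h2⟩, rfl⟩
  have m1 : e ∈ chi (1 - e) := by
    have := mem 0 (by simp) (by simp); simpa using this
  have m2 : (e + x) ∈ chi (1 - e) := mem x (by rw [hex, hxe, add_zero]) hxx
  have m3 : (e + y) ∈ chi (1 - e) := mem y (by rw [hey, hye, zero_add]) hyy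
  have hx0 : x ≠ 0 := hr
  have hy0 : y ≠ 0 := hs
  have hxy : x ≠ y := by
    intro h
    apply hx0
    rw [← hex, h, hey]
  let f : ULift.{u} (Fin 3) → chi (1 - e) :=
    fun i => ![⟨e, m1⟩, ⟨e + x, m2⟩, ⟨e + y, m3⟩] i.down
  have hf : Function.Injective f := by
    intro ⟨a⟩ ⟨b⟩ hab
    fin_cases a <;> fin_cases b <;> simp_all [f, Subtype.ext_iff] <;>
      first
      | rfl
      | (exfalso; first
          | exact hx0 (by linear_combination -hab)
          | exact hy0 (by linear_combination -hab)
          | exact hx0 (by linear_combination hab)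
          | exact hy0 (by linear_combination hab)
          | exact hxy (by linear_combination hab)
          | exact hxy (by linear_combination -hab))
  calc (3 : Cardinal.{u}) = Cardinal.mk (ULift.{u} (Fin 3)) := by simp
  _ ≤ Cardinal.mk (chi (1 - e)) := Cardinal.mk_le_of_injective hf
end
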